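/- A noncommutative crossing partition π of [n] avoids the pattern 312 if and only if the labeled binary tree φ⁻¹(π) is canonical. -/

import Mathlib

/-- Binary trees: each node has a (possibly empty) left subtree, a label, and a
(possibly empty) right subtree. -/
inductive BTree where
  | leaf : BTree
  | node : BTree → ℕ → BTree → BTree

/-- The in-order reading word of the labels of a binary tree. -/
def BTree.labels : BTree → List ℕ
  | .leaf => []
  | .node l x r => l.labels ++ x :: r.labels

/-- Labels increase from the root towards the leaves. -/
def BTree.Incr : BTree → Prop
  | .leaf => True
  | .node l x r => (∀ y ∈ l.labels, x < y) ∧ (∀ y ∈ r.labels, x < y) ∧ l.Incr ∧ r.Incr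

/-- A labeled binary tree with `n` nodes: labels are exactly `{1,...,n}`, each used once,
increasing from the root to the leaves. -/
def IsLabeledBTree (n : ℕ) (t : BTree) : Prop :=
  t.labels.Perm (List.range' 1 n) ∧ t.Incr

/-- The node labeled `b` is weakly right of the node labeled `a`: `b` is a descendant of `a`,
or the paths to the root branch with `a` on the left and `b` on the right. -/
def BTree.WeaklyRight : BTree → ℕ → ℕ → Prop
  | .leaf, _, _ => False
  | .node l x r, a, b =>
      (x = a ∧ (b ∈ l.labels ∨ b ∈ r.labels)) ∨
      (a ∈ l.labels ∧ b ∈ r.labels) ∨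
      l.WeaklyRight a b ∨ r.WeaklyRight a b

/-- A labeled binary tree is canonical if, for every `i`, the node labeled `i + 1`
is weakly right of the node labeled `i`. -/
def BTree.Canonical (t : BTree) : Prop :=
  ∀ i : ℕ, i ∈ t.labels → i + 1 ∈ t.labels → t.WeaklyRight i (i + 1)

/-- A word avoids the pattern 312: no positions `i < j < k` with `w_j < w_k < w_i`. -/
def Avoids312 (w : List ℕ) : Prop :=
  ¬ ∃ i j k : ℕ, i < j ∧ j < k ∧ k < w.length ∧
      w.getD j 0 < w.getD k 0 ∧ w.getD k 0 < w.getD i 0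

/- ### Auxiliary lemmas -/

lemma getD_inj {w : List ℕ} (hnd : w.Nodup) {p q : ℕ} (hp : p < w.length)
    (hq : q < w.length) (h : w.getD p 0 = w.getD q 0) : p = q := by
  rw [List.getD_eq_getElem _ _ hp, List.getD_eq_getElem _ _ hq] at h
  exact (hnd.getElem_inj_iff).mp h

lemma mem_getD {w : List ℕ} {p : ℕ} (hp : p < w.length) : w.getD p 0 ∈ w := by
  rw [List.getD_eq_getElem _ _ hp]; exact List.getElem_mem hp

lemma getD_of_mem {w : List ℕ} {v : ℕ} (hv : v ∈ w) :
    ∃ p, p < w.length ∧ w.getD p 0 = v := by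
  obtain ⟨p, hp, hpe⟩ := List.getElem_of_mem hv
  exact ⟨p, hp, by rw [List.getD_eq_getElem _ _ hp]; exact hpe⟩

lemma getD_mid (L R : List ℕ) (x : ℕ) : (L ++ x :: R).getD L.length 0 = x := by
  rw [List.getD_append_right _ _ _ _ le_rfl]
  simp

lemma getD_right (L R : List ℕ) (x : ℕ) (i : ℕ) :
    (L ++ x :: R).getD (L.length + 1 + i) 0 = R.getD i 0 := by
  rw [List.getD_append_right _ _ _ _ (by omega)]
  have : L.length + 1 + i - L.length = i + 1 := by omega
  rw [this]
  simp

lemma wr_mem : ∀ {t : BTree} {a b : ℕ}, t.WeaklyRight a b → a ∈ t.labels ∧ b ∈ t.labels := by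
  intro t
  induction t with
  | leaf => intro a b h; exact absurd h (by simp [BTree.WeaklyRight])
  | node l x r ihl ihr =>
    intro a b h
    simp only [BTree.WeaklyRight] at h
    simp only [BTree.labels, List.mem_append, List.mem_cons]
    rcases h with ⟨rfl, hb | hb⟩ | ⟨ha, hb⟩ | h | h
    · exact ⟨Or.inr (Or.inl rfl), Or.inl hb⟩
    · exact ⟨Or.inr (Or.inl rfl), Or.inr (Or.inr hb)⟩
    · exact ⟨Or.inl ha, Or.inr (Or.inr hb)⟩
    · obtain ⟨h1, h2⟩ := ihl h; exact ⟨Or.inl h1, Or.inl h2⟩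
    · obtain ⟨h1, h2⟩ := ihr h; exact ⟨Or.inr (Or.inr h1), Or.inr (Or.inr h2)⟩

lemma wr_total : ∀ {t : BTree} {a b : ℕ}, a ∈ t.labels → b ∈ t.labels → a ≠ b →
    t.WeaklyRight a b ∨ t.WeaklyRight b a := by
  intro t
  induction t with
  | leaf => intro a b ha; exact absurd ha (by simp [BTree.labels])
  | node l x r ihl ihr =>
    intro a b ha hb hab
    simp only [BTree.labels, List.mem_append, List.mem_cons] at ha hb
    simp only [BTree.WeaklyRight]
    rcases ha with ha | rfl | ha
    · rcases hb with hb | rfl | hb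
      · rcases ihl ha hb hab with h | h
        · exact Or.inl (Or.inr (Or.inr (Or.inl h)))
        · exact Or.inr (Or.inr (Or.inr (Or.inl h)))
      · exact Or.inr (Or.inl ⟨rfl, Or.inl ha⟩)
      · exact Or.inl (Or.inr (Or.inl ⟨ha, hb⟩))
    · rcases hb with hb | rfl | hb
      · exact Or.inl (Or.inl ⟨rfl, Or.inl hb⟩)
      · exact absurd rfl hab
      · exact Or.inl (Or.inl ⟨rfl, Or.inr hb⟩)
    · rcases hb with hb | rfl | hb
      · exact Or.inr (Or.inr (Or.inl ⟨hb, ha⟩))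
      · exact Or.inr (Or.inl ⟨rfl, Or.inr ha⟩)
      · rcases ihr ha hb hab with h | h
        · exact Or.inl (Or.inr (Or.inr (Or.inr h)))
        · exact Or.inr (Or.inr (Or.inr (Or.inr h)))

/-- From `WeaklyRight a b` with `b < a` (possible only via the branching case),
extract a 312-style pattern `a … x … b` with `x < b < a` in the in-order word. -/
lemma pattern_of_wr : ∀ {t : BTree}, t.Incr → ∀ {a b : ℕ}, t.WeaklyRight a b → b < a →
    ∃ i j k, i < j ∧ j < k ∧ k < t.labels.length ∧
      t.labels.getD i 0 = a ∧ t.labels.getD j 0 < b ∧ t.labels.getD k 0 = b := by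
  intro t
  induction t with
  | leaf => intro _ a b h; exact absurd h (by simp [BTree.WeaklyRight])
  | node l x r ihl ihr =>
    intro hI a b hwr hba
    obtain ⟨hxl, hxr, hIl, hIr⟩ := hI
    simp only [BTree.WeaklyRight] at hwr
    simp only [BTree.labels]
    rcases hwr with ⟨rfl, hb | hb⟩ | ⟨ha, hb⟩ | h | h
    · exact absurd (hxl b hb) (by omega)
    · exact absurd (hxr b hb) (by omega)
    · -- a in left, b in right
      obtain ⟨i0, hi0, hie⟩ := getD_of_mem ha
      obtain ⟨k0, hk0, hke⟩ := getD_of_mem hb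
      refine ⟨i0, l.labels.length, l.labels.length + 1 + k0, hi0, by omega, ?_, ?_, ?_, ?_⟩
      · simp only [List.length_append, List.length_cons]; omega
      · rw [List.getD_append _ _ _ _ hi0]; exact hie
      · rw [getD_mid]; exact hxr b hb
      · rw [getD_right]; exact hke
    · obtain ⟨i, j, k, hij, hjk, hk, h1, h2, h3⟩ := ihl hIl h hba
      refine ⟨i, j, k, hij, hjk, ?_, ?_, ?_, ?_⟩
      · simp only [List.length_append, List.length_cons]; omega
      · rw [List.getD_append _ _ _ _ (by omega)]; exact h1
      · rw [List.getD_append _ _ _ _ (by omega)]; exact h2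
      · rw [List.getD_append _ _ _ _ hk]; exact h3
    · obtain ⟨i, j, k, hij, hjk, hk, h1, h2, h3⟩ := ihr hIr h hba
      refine ⟨l.labels.length + 1 + i, l.labels.length + 1 + j,
        l.labels.length + 1 + k, by omega, by omega, ?_, ?_, ?_, ?_⟩
      · simp only [List.length_append, List.length_cons]; omega
      · rw [getD_right]; exact h1
      · rw [getD_right]; exact h2
      · rw [getD_right]; exact h3

/-- If `m+1` appears before some `c < m` which appears before `m`, then
`m+1` is not weakly right of `m`. -/
lemma not_wr : ∀ {t : BTree}, t.Incr → t.labels.Nodup → ∀ {m c p q r : ℕ},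
    p < q → q < r → r < t.labels.length →
    t.labels.getD p 0 = m + 1 → t.labels.getD q 0 = c → t.labels.getD r 0 = m → c < m →
    ¬ t.WeaklyRight m (m + 1) := by
  intro t
  induction t with
  | leaf => intro _ _ m c p q r _ _ _ _ _ _ _ h; exact absurd h (by simp [BTree.WeaklyRight])
  | node l x rt ihl ihr =>
    intro hI hnd m c p q r hpq hqr hr hp hq hrm hc hwr
    obtain ⟨hxl, hxr, hIl, hIr⟩ := hI
    simp only [BTree.labels] at hnd hr hp hq hrm
    set L := l.labels with hL
    set R := rt.labels with hR
    have hlen : (L ++ x :: R).length = L.length + 1 + R.length := by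
      simp [List.length_append]; omega
    have hndL : L.Nodup := hnd.of_append_left
    have hndR : R.Nodup := (hnd.of_append_right).of_cons
    have hplen : p < (L ++ x :: R).length := by omega
    have hqlen : q < (L ++ x :: R).length := by omega
    simp only [BTree.WeaklyRight] at hwr
    -- position lemmas
    have posL : ∀ {v s : ℕ}, v ∈ L → s < (L ++ x :: R).length →
        (L ++ x :: R).getD s 0 = v → s < L.length := by
      intro v s hv hs hsv
      obtain ⟨u, hu, hue⟩ := getD_of_mem hv
      have h1 : (L ++ x :: R).getD u 0 = v := by
        rw [List.getD_append _ _ _ _ hu]; exact hue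
      have h2 : s = u := getD_inj hnd (p := s) (q := u) hs (by omega) (by rw [hsv, h1])
      omega
    have posR : ∀ {v s : ℕ}, v ∈ R → s < (L ++ x :: R).length →
        (L ++ x :: R).getD s 0 = v → L.length < s ∧ R.getD (s - (L.length + 1)) 0 = v := by
      intro v s hv hs hsv
      obtain ⟨u, hu, hue⟩ := getD_of_mem hv
      have h1 : (L ++ x :: R).getD (L.length + 1 + u) 0 = v := by
        rw [getD_right]; exact hue
      have h2 : s = L.length + 1 + u :=
        getD_inj hnd (p := s) (q := L.length + 1 + u) hs (by omega) (by rw [hsv, h1])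
      constructor
      · omega
      · have : s - (L.length + 1) = u := by omega
        rw [this]; exact hue
    have posX : ∀ {s : ℕ}, s < (L ++ x :: R).length →
        (L ++ x :: R).getD s 0 = x → s = L.length := by
      intro s hs hsx
      exact getD_inj hnd (p := s) (q := L.length) hs (by omega) (by rw [hsx, getD_mid])
    rcases hwr with ⟨hxm, hb⟩ | ⟨ha, hb⟩ | h | h
    · -- x = m
      have hrL : r = L.length := posX (by omega) (by rw [hrm, hxm])
      rcases hb with hb | hb
      · -- m+1 in left subtree
        have hpL : p < L.length := posL hb hplen hp
        have hqL : q < L.length := by omega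
        have : c ∈ L := by
          have : (L ++ x :: R).getD q 0 = L.getD q 0 := List.getD_append _ _ _ _ hqL
          rw [hq] at this
          rw [this]; exact mem_getD hqL
        have := hxl c this
        omega
      · -- m+1 in right subtree
        have := (posR hb hplen hp).1
        omega
    · -- m in left, m+1 in right
      have hrL : r < L.length := posL ha (by omega) hrm
      have := (posR hb hplen hp).1
      omega
    · -- recurse left
      obtain ⟨hmL, hm1L⟩ := wr_mem h
      have hpL : p < L.length := posL hm1L hplen hp
      have hrL : r < L.length := posL hmL (by omega) hrm
      refine ihl hIl hndL hpq hqr hrL ?_ ?_ ?_ hc h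
      · rw [← List.getD_append _ (x :: R) _ _ hpL]; exact hp
      · rw [← List.getD_append _ (x :: R) _ _ (by omega)]; exact hq
      · rw [← List.getD_append _ (x :: R) _ _ hrL]; exact hrm
    · -- recurse right
      obtain ⟨hmR, hm1R⟩ := wr_mem h
      obtain ⟨hpgt, hpR⟩ := posR hm1R hplen hp
      obtain ⟨hrgt, hrR⟩ := posR hmR (by omega) hrm
      have hqgt : L.length < q := by omega
      have hqR : (L ++ x :: R).getD q 0 = R.getD (q - (L.length + 1)) 0 := by
        have hq1 : q = L.length + 1 + (q - (L.length + 1)) := by omega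
        rw [hq1, getD_right]
        congr 1
        omega
      have hrlt : r - (L.length + 1) < R.length := by omega
      refine ihr hIr hndR (m := m) (c := c)
        (p := p - (L.length + 1)) (q := q - (L.length + 1)) (r := r - (L.length + 1))
        (by omega) (by omega) hrlt hpR (by rw [← hqR]; exact hq) hrR hc h

/-- Any 312 pattern can be reduced to one whose “3” and “1” values are consecutive
integers, provided values in the word are closed under successor below the max. -/
lemma reduce : ∀ (g : ℕ) (w : List ℕ), w.Nodup →
    (∀ u v : ℕ, u ∈ w → v ∈ w → u < v → u + 1 ∈ w) →
    ∀ a b c i j k : ℕ, a ≤ b + g → i < j → j < k → k < w.length →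
    w.getD i 0 = a → w.getD j 0 = c → w.getD k 0 = b → c < b → b < a →
    ∃ m p q r, p < q ∧ q < r ∧ r < w.length ∧
      w.getD p 0 = m + 1 ∧ w.getD r 0 = m ∧ w.getD q 0 < m := by
  intro g
  induction g with
  | zero => intro w _ _ a b c i j k hab _ _ _ _ _ _ _ hba; omega
  | succ g ih =>
    intro w hnd hcl a b c i j k hab hij hjk hk hi hj hkb hcb hba
    by_cases hcons : a = b + 1
    · exact ⟨b, i, j, k, hij, hjk, hk, by rw [hi, hcons], hkb, by rw [hj]; exact hcb⟩
    · have hbw : b ∈ w := by rw [← hkb]; exact mem_getD hk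
      have haw : a ∈ w := by rw [← hi]; exact mem_getD (by omega)
      have hb1w : b + 1 ∈ w := hcl b a hbw haw hba
      obtain ⟨p0, hp0, hp0e⟩ := getD_of_mem hb1w
      have hp0j : p0 ≠ j := by
        intro he; rw [he, hj] at hp0e; omega
      rcases lt_or_gt_of_ne hp0j with hlt | hgt
      · exact ⟨b, p0, j, k, hlt, hjk, hk, hp0e, hkb, by rw [hj]; exact hcb⟩
      · exact ih w hnd hcl a (b + 1) c i j p0 (by omega) hij hgt hp0 hi hj hp0e
          (by omega) (by omega)

/-- A noncommutative crossing partition `π` of `[n]` avoids 312 iff the corresponding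
labeled binary tree `φ⁻¹(π)` is canonical.  Under the bijection `φ` (in-order reading
word), this says: for every labeled binary tree `t` with `n` nodes, the in-order word of
`t` avoids 312 iff `t` is canonical. -/
theorem avoids312_iff_canonical (n : ℕ) (t : BTree) (h : IsLabeledBTree n t) :
    Avoids312 t.labels ↔ t.Canonical := by
  obtain ⟨hperm, hI⟩ := h
  have hnd : t.labels.Nodup := hperm.nodup_iff.mpr List.nodup_range'
  have hmem : ∀ v : ℕ, v ∈ t.labels ↔ 1 ≤ v ∧ v < 1 + n := by
    intro v; rw [hperm.mem_iff, List.mem_range']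
    constructor
    · rintro ⟨i, hi, rfl⟩; omega
    · intro hv; exact ⟨v - 1, by omega, by omega⟩
  have hcl : ∀ u v : ℕ, u ∈ t.labels → v ∈ t.labels → u < v → u + 1 ∈ t.labels := by
    intro u v hu hv huv
    rw [hmem] at hu hv ⊢
    omega
  constructor
  · -- Avoids312 → Canonical
    intro hA i hi hi1
    by_contra hnw
    rcases wr_total hi hi1 (by omega) with hwr | hwr
    · exact hnw hwr
    · obtain ⟨i0, j0, k0, hij, hjk, hk, h1, h2, h3⟩ := pattern_of_wr hI hwr (by omega)
      exact hA ⟨i0, j0, k0, hij, hjk, hk, by rw [h3]; exact h2, by rw [h3, h1]; omega⟩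
  · -- Canonical → Avoids312
    intro hC
    rintro ⟨i, j, k, hij, hjk, hk, h1, h2⟩
    obtain ⟨m, p, q, r, hpq, hqr, hr, hp, hrm, hqlt⟩ :=
      reduce (t.labels.getD i 0) t.labels hnd hcl (t.labels.getD i 0) (t.labels.getD k 0)
        (t.labels.getD j 0) i j k (by omega) hij hjk hk rfl rfl rfl h1 h2
    have hmw : m ∈ t.labels := by rw [← hrm]; exact mem_getD hr
    have hm1w : m + 1 ∈ t.labels := by rw [← hp]; exact mem_getD (by omega)
    exact not_wr hI hnd hpq hqr hr hp rfl hrm hqlt (hC m hmw hm1w)
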